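/- Under the standing assumptions, with 𝒟f = f′ on D(𝒟) = {f ∈ 𝒳 ∩ C¹([0,t₀],X) : f′(0) = 0}: for every f ∈ D(𝒟) one has R̄ℬ f ∈ D(𝒟) and 𝒟(R̄ℬ f) = R̄ℬ(𝒟 f), and consequently R_C f ∈ D(𝒟) and 𝒟(R_C f) = R_C(𝒟 f), where (R̄ℬ f)(t) = ∫₀ᵗ T̄(t−s) B f(s) ds and R_C f = Σ_{n=0}^∞ (R̄ℬ)ⁿ R f with (R f)(t) = ∫₀ᵗ T(t−s) f(s) ds. -/

import Mathlib

open Filter Topology Set MeasureTheory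

namespace DS

section SemigroupDefs

variable {E : Type*} [AddCommGroup E] [Module ℝ E] [TopologicalSpace E]

/-- `I` is the Riemann integral of `g` over `[a,b]`, defined as the limit of the left Riemann
sums over uniform partitions. -/
def IsRiemannIntegral (g : ℝ → E) (a b : ℝ) (I : E) : Prop :=
  Tendsto
    (fun n : ℕ => ((b - a) / (n : ℝ)) •
      ∑ k ∈ Finset.range n, g (a + (b - a) * (k : ℝ) / (n : ℝ)))
    atTop (𝓝 I)

/-- `(T t)_{t ≥ 0}` is a `C₀`-semigroup. -/
def IsC0Semigroup (T : ℝ → E →L[ℝ] E) : Prop :=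
  T 0 = ContinuousLinearMap.id ℝ E ∧
    (∀ t s : ℝ, 0 ≤ t → 0 ≤ s → T (t + s) = (T t).comp (T s)) ∧
    ∀ x : E, ContinuousOn (fun t : ℝ => T t x) (Ici (0 : ℝ))

/-- Local equicontinuity of a one-parameter family of operators. -/
def IsLocallyEquicontinuous (T : ℝ → E →L[ℝ] E) : Prop :=
  ∀ t₀ : ℝ, 0 < t₀ → ∀ p : Seminorm ℝ E, Continuous (fun x : E => p x) →
    ∃ q : Seminorm ℝ E, Continuous (fun x : E => q x) ∧
      ∃ M : ℝ, 0 ≤ M ∧ ∀ x : E, ∀ t ∈ Icc (0 : ℝ) t₀, p (T t x) ≤ M * q x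

/-- `A`, with domain `domA`, is the infinitesimal generator of the semigroup `T`. -/
def IsGenerator (T : ℝ → E →L[ℝ] E) (domA : Set E) (A : E → E) : Prop :=
  (∀ x : E, x ∈ domA ↔
      ∃ y : E, Tendsto (fun t : ℝ => t⁻¹ • (T t x - x)) (𝓝[>] 0) (𝓝 y)) ∧
    ∀ x ∈ domA, Tendsto (fun t : ℝ => t⁻¹ • (T t x - x)) (𝓝[>] 0) (𝓝 (A x))

/-- Derivative of a vector-valued function within a set, in a topological vector space. -/
def HasDerivWithinAtLC (f : ℝ → E) (y : E) (s : Set ℝ) (t : ℝ) : Prop :=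
  Tendsto (fun u : ℝ => (u - t)⁻¹ • (f u - f t)) (𝓝[s \ {t}] t) (𝓝 y)

/-- Membership in `𝒳 = { f ∈ C([0,t₀],E) : f 0 = 0 }`; functions are given on all of `ℝ`,
but only their restriction to `[0,t₀]` is relevant. -/
def MemXc (t₀ : ℝ) (f : ℝ → E) : Prop :=
  ContinuousOn f (Icc (0 : ℝ) t₀) ∧ f 0 = 0

/-- `f ∈ D(𝒟)` with `𝒟 f = f'`. -/
def MemDD (t₀ : ℝ) (f f' : ℝ → E) : Prop :=
  MemXc t₀ f ∧ (∀ t ∈ Icc (0 : ℝ) t₀, HasDerivWithinAtLC f (f' t) (Icc (0 : ℝ) t₀) t) ∧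
    ContinuousOn f' (Icc (0 : ℝ) t₀) ∧ f' 0 = 0

/-- `f ∈ D(𝒜)` for the operator `𝒜` induced on `𝒳` by `A` with domain `domA`. -/
def MemDA (t₀ : ℝ) (domA : Set E) (A : E → E) (f : ℝ → E) : Prop :=
  MemXc t₀ f ∧ (∀ t ∈ Icc (0 : ℝ) t₀, f t ∈ domA) ∧
    ContinuousOn (fun t : ℝ => A (f t)) (Icc (0 : ℝ) t₀)

end SemigroupDefs

/-- Sequential completeness of a uniform space. -/
def SeqComplete (E : Type*) [UniformSpace E] : Prop :=
  ∀ u : ℕ → E, CauchySeq u → ∃ x : E, Tendsto u atTop (𝓝 x)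

end DS

open DS
section Helpers

open Filter Topology Set MeasureTheory

lemma my_biSup_le {β : Type*} {f : β → ℝ} {s : Set β} {a : ℝ} (ha : 0 ≤ a)
    (h : ∀ x ∈ s, f x ≤ a) : (⨆ x ∈ s, f x) ≤ a :=
  Real.iSup_le (fun x => Real.iSup_le (fun hx => h x hx) ha) ha

lemma my_le_biSup {β : Type*} (f : β → ℝ) {s : Set β} (hB : BddAbove (f '' s))
    {c : β} (hc : c ∈ s) (h0 : ∀ x ∈ s, 0 ≤ f x) : f c ≤ ⨆ x ∈ s, f x := by
  obtain ⟨M, hM⟩ := hB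
  have hM' : ∀ x ∈ s, f x ≤ M := fun x hx => hM (mem_image_of_mem f hx)
  have hg : ∀ x, (⨆ _ : x ∈ s, f x) ≤ max M 0 := by
    intro x
    by_cases hx : x ∈ s
    · refine Real.iSup_le (fun _ => le_max_of_le_left (hM' x hx)) (le_max_right _ _)
    · refine Real.iSup_le (fun h => absurd h hx) (le_max_right _ _)
  have hbdd : BddAbove (Set.range fun x => ⨆ _ : x ∈ s, f x) := by
    refine ⟨max M 0, ?_⟩
    rintro y ⟨x, rfl⟩
    exact hg x
  have h1 : f c = ⨆ _ : c ∈ s, f c := by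
    haveI : Nonempty (c ∈ s) := ⟨hc⟩
    exact (ciSup_const).symm
  rw [h1]
  exact le_ciSup hbdd c

/-- Uniform left Riemann sums of a continuous real function converge to its integral. -/
lemma riemann_real {ψ : ℝ → ℝ} {a b : ℝ} (hab : a ≤ b)
    (hψ : ContinuousOn ψ (Icc a b)) :
    Tendsto (fun n : ℕ => ((b - a) / (n : ℝ)) •
        ∑ k ∈ Finset.range n, ψ (a + (b - a) * (k : ℝ) / (n : ℝ)))
      atTop (𝓝 (∫ x in a..b, ψ x)) := by
  rcases eq_or_lt_of_le hab with rfl | hlt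
  · simp
  have hba : 0 < b - a := sub_pos.2 hlt
  rw [Metric.tendsto_atTop]
  intro ε hε
  set ε' : ℝ := ε / (2 * (b - a)) with hε'def
  have hε' : 0 < ε' := by positivity
  obtain ⟨δ, hδ, hδ'⟩ := Metric.uniformContinuousOn_iff.1
    (isCompact_Icc.uniformContinuousOn_of_continuous hψ) ε' hε'
  obtain ⟨N₀, hN₀⟩ := exists_nat_gt ((b - a) / δ)
  refine ⟨max N₀ 1, fun n hn => ?_⟩
  have hn1 : 1 ≤ n := le_trans (le_max_right _ _) hn
  have hnpos : (0 : ℝ) < n := by exact_mod_cast hn1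
  have hmesh : (b - a) / n < δ := by
    have h1 : b - a < N₀ * δ := by
      have := (div_lt_iff₀ hδ).1 hN₀
      linarith
    rw [div_lt_iff₀ hnpos]
    have h2 : (N₀ : ℝ) ≤ n := by exact_mod_cast le_trans (le_max_left _ _) hn
    nlinarith
  set P : ℕ → ℝ := fun k => a + (b - a) * (k : ℝ) / (n : ℝ) with hP
  have hPmono : ∀ k : ℕ, P k ≤ P (k + 1) := by
    intro k
    simp only [hP]
    have : (b - a) * (k : ℝ) / n ≤ (b - a) * ((k : ℝ) + 1) / n := by
      gcongr <;> linarith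
    push_cast
    linarith
  have hPmem : ∀ k : ℕ, k ≤ n → P k ∈ Icc a b := by
    intro k hk
    constructor
    · simp only [hP]
      have : 0 ≤ (b - a) * (k : ℝ) / n := by positivity
      linarith
    · simp only [hP]
      rw [add_comm, ← le_sub_iff_add_le, div_le_iff₀ hnpos]
      have : (k : ℝ) ≤ n := by exact_mod_cast hk
      nlinarith
  have hstep : ∀ k : ℕ, P (k + 1) - P k = (b - a) / n := by
    intro k
    simp only [hP]
    push_cast
    field_simp
    ring
  have hsub : ∀ k : ℕ, k + 1 ≤ n → Icc (P k) (P (k + 1)) ⊆ Icc a b := by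
    intro k hk
    exact Icc_subset_Icc (hPmem k (by omega)).1 (hPmem (k + 1) hk).2
  have hint : ∀ k < n, IntervalIntegrable ψ volume (P k) (P (k + 1)) := by
    intro k hk
    refine (hψ.mono ?_).intervalIntegrable
    rw [uIcc_of_le (hPmono k)]
    exact hsub k (by omega)
  have hP0 : P 0 = a := by simp [hP]
  have hPn : P n = b := by
    simp only [hP]
    field_simp
    ring
  have hIab : ∫ x in a..b, ψ x = ∑ k ∈ Finset.range n, ∫ x in (P k)..(P (k+1)), ψ x := by
    rw [intervalIntegral.sum_integral_adjacent_intervals hint, hP0, hPn]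
  have hSk : ∀ k : ℕ, ((b - a) / (n : ℝ)) * ψ (P k) = ∫ _ in (P k)..(P (k+1)), ψ (P k) := by
    intro k
    rw [intervalIntegral.integral_const, smul_eq_mul, hstep]
  have key : ∀ k < n, |(∫ x in (P k)..(P (k+1)), ψ x) - ((b - a) / n) * ψ (P k)| ≤
      ε' * ((b - a) / n) := by
    intro k hk
    rw [hSk k, ← intervalIntegral.integral_sub (hint k hk)
      (intervalIntegrable_const)]
    have := intervalIntegral.norm_integral_le_of_norm_le_const (a := P k) (b := P (k+1))
      (C := ε') (f := fun x => ψ x - ψ (P k)) ?_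
    · rw [Real.norm_eq_abs] at this
      calc |∫ x in (P k)..(P (k+1)), (ψ x - ψ (P k))| ≤ ε' * |P (k+1) - P k| := this
      _ = ε' * ((b - a) / n) := by
            rw [hstep k, abs_of_pos (show (0:ℝ) < (b-a)/n by positivity)]
    · intro x hx
      rw [uIoc_of_le (hPmono k)] at hx
      have hxm : x ∈ Icc a b := hsub k (by omega) ⟨le_of_lt hx.1, hx.2⟩
      have hdist : dist x (P k) < δ := by
        rw [Real.dist_eq, abs_of_pos (sub_pos.2 hx.1)]
        calc x - P k ≤ P (k+1) - P k := by linarith [hx.2]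
        _ = (b - a)/n := hstep k
        _ < δ := hmesh
      exact le_of_lt (hδ' x hxm (P k) (hPmem k (by omega)) hdist)
  have hsum : |(∑ k ∈ Finset.range n, ((b-a)/(n:ℝ)) * ψ (P k)) - ∫ x in a..b, ψ x| ≤
      ε' * (b - a) := by
    rw [hIab, ← Finset.sum_sub_distrib]
    calc |∑ k ∈ Finset.range n, (((b-a)/(n:ℝ)) * ψ (P k) - ∫ x in (P k)..(P (k+1)), ψ x)|
        ≤ ∑ k ∈ Finset.range n, |((b-a)/(n:ℝ)) * ψ (P k) - ∫ x in (P k)..(P (k+1)), ψ x| :=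
          Finset.abs_sum_le_sum_abs _ _
      _ ≤ ∑ _k ∈ Finset.range n, ε' * ((b-a)/n) := by
          apply Finset.sum_le_sum
          intro k hk
          rw [abs_sub_comm]
          exact key k (Finset.mem_range.1 hk)
      _ = n * (ε' * ((b-a)/n)) := by rw [Finset.sum_const, Finset.card_range, nsmul_eq_mul]
      _ = ε' * (b - a) := by field_simp <;> ring
  rw [Real.dist_eq]
  have heq : ((b - a) / (n : ℝ)) • ∑ k ∈ Finset.range n, ψ (a + (b - a) * (k : ℝ) / (n : ℝ))
      = ∑ k ∈ Finset.range n, ((b-a)/(n:ℝ)) * ψ (P k) := by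
    rw [smul_eq_mul, Finset.mul_sum]
  rw [heq]
  calc |(∑ k ∈ Finset.range n, ((b-a)/(n:ℝ)) * ψ (P k)) - ∫ x in a..b, ψ x| ≤ ε' * (b-a) := hsum
  _ = ε / 2 := by rw [hε'def]; field_simp
  _ < ε := by linarith

end Helpers
section Helpers2

open Filter Topology Set MeasureTheory DS

variable {E : Type*} [AddCommGroup E] [Module ℝ E] [TopologicalSpace E]

/-- Testing a Riemann integral against a continuous linear functional. -/
lemma clm_isRiemannIntegral [T2Space E] {g : ℝ → E} {a b : ℝ} {L : E} (hab : a ≤ b)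
    (hI : IsRiemannIntegral g a b L) (hg : ContinuousOn g (Icc a b)) (φ : E →L[ℝ] ℝ) :
    φ L = ∫ x in a..b, φ (g x) := by
  refine tendsto_nhds_unique ?_ (riemann_real hab (φ.continuous.comp_continuousOn hg))
  have := (φ.continuous.tendsto L).comp hI
  refine this.congr fun n => ?_
  simp only [Function.comp_apply, _root_.map_smul, map_sum, smul_eq_mul]

/-- A `HasDerivWithinAtLC` implies continuity within the set. -/
lemma DS.HasDerivWithinAtLC.continuousWithinAt [IsTopologicalAddGroup E] [ContinuousSMul ℝ E]
    {f : ℝ → E} {y : E} {s : Set ℝ} {t : ℝ}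
    (h : HasDerivWithinAtLC f y s t) : ContinuousWithinAt f s t := by
  have h1 : Tendsto f (𝓝[s \ {t}] t) (𝓝 (f t)) := by
    have h2 : Tendsto (fun u : ℝ => (u - t) • ((u - t)⁻¹ • (f u - f t)) + f t)
        (𝓝[s \ {t}] t) (𝓝 ((0 : ℝ) • y + f t)) := by
      refine Tendsto.add (Tendsto.smul ?_ h) tendsto_const_nhds
      have : Tendsto (fun u : ℝ => u - t) (𝓝 t) (𝓝 (t - t)) :=
        (continuous_id.sub continuous_const).tendsto t
      rw [sub_self] at this
      exact this.mono_left nhdsWithin_le_nhds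
    rw [zero_smul, zero_add] at h2
    refine h2.congr' ?_
    filter_upwards [eventually_mem_nhdsWithin] with u hu
    have hut : u ≠ t := hu.2
    rw [smul_inv_smul₀ (sub_ne_zero.2 hut), sub_add_cancel]
  have hsplit : 𝓝[s] t ≤ 𝓝[s \ {t}] t ⊔ 𝓝[{t}] t := by
    rw [← nhdsWithin_union]
    exact nhdsWithin_mono _ (fun u hu => by
      by_cases hut : u = t
      · exact Or.inr (by simp [hut])
      · exact Or.inl ⟨hu, hut⟩)
  refine Tendsto.mono_left ?_ hsplit
  rw [tendsto_sup]
  refine ⟨h1, ?_⟩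
  have : Tendsto (fun _ : ℝ => f t) (𝓝[({t} : Set ℝ)] t) (𝓝 (f t)) := tendsto_const_nhds
  refine Tendsto.congr' ?_ this
  filter_upwards [eventually_mem_nhdsWithin] with u hu
  rw [mem_singleton_iff] at hu
  rw [hu]

/-- Mean value inequality for seminorms. -/
lemma seminorm_mvi [IsTopologicalAddGroup E] [ContinuousSMul ℝ E]
    (p : Seminorm ℝ E) (hp : Continuous p) {g g' : ℝ → E} {a b : ℝ} (hab : a ≤ b)
    (hg : ∀ t ∈ Icc a b, HasDerivWithinAtLC g (g' t) (Icc a b) t)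
    {C : ℝ} (hC0 : 0 ≤ C) (hC : ∀ t ∈ Icc a b, p (g' t) ≤ C) :
    p (g b - g a) ≤ C * (b - a) := by
  have hgc : ContinuousOn g (Icc a b) := fun t ht => (hg t ht).continuousWithinAt
  have hmem : a ∈ Icc a b := ⟨le_refl a, hab⟩
  set F : ℝ → ℝ := fun x => p (g x - g a) with hF
  have hFc : ContinuousOn F (Icc a b) :=
    hp.comp_continuousOn (hgc.sub continuousOn_const)
  have main : ∀ x ∈ Icc a b, F x ≤ C * (x - a) := by
    refine image_le_of_liminf_slope_right_le_deriv_boundary (B := fun x => C * (x - a)) (B' := fun _ => C) hFc ?_ ?_ ?_ ?_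
    · simp [hF]
    · exact (continuousOn_const.mul (continuousOn_id.sub continuousOn_const))
    · intro x _
      simpa using (((hasDerivWithinAt_id x (Ici x)).sub_const a).const_mul C)
    · intro x hx r hr
      have hxb : x < b := hx.2
      have hxI : x ∈ Icc a b := ⟨hx.1, le_of_lt hxb⟩
      have hq : Tendsto (fun z : ℝ => p ((z - x)⁻¹ • (g z - g x)))
          (𝓝[Icc a b \ {x}] x) (𝓝 (p (g' x))) :=
        (hp.tendsto _).comp (hg x hxI)
      have hev : ∀ᶠ z in 𝓝[Icc a b \ {x}] x, p ((z - x)⁻¹ • (g z - g x)) < r :=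
        hq.eventually_lt_const (lt_of_le_of_lt (hC x hxI) hr)
      have hle : 𝓝[Ioc x b] x ≤ 𝓝[Icc a b \ {x}] x :=
        nhdsWithin_mono _ (fun z hz => ⟨⟨le_trans hx.1 (le_of_lt hz.1), hz.2⟩, ne_of_gt hz.1⟩)
      have hne : (𝓝[Ioc x b] x).NeBot := by
        apply mem_closure_iff_nhdsWithin_neBot.1
        rw [closure_Ioc (ne_of_lt hxb)]
        exact ⟨le_refl x, le_of_lt hxb⟩
      have hfreq : ∃ᶠ z in 𝓝[Ioc x b] x,
          p ((z - x)⁻¹ • (g z - g x)) < r ∧ z ∈ Ioc x b :=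
        ((hev.filter_mono hle).and eventually_mem_nhdsWithin).frequently
      refine (hfreq.mono ?_).filter_mono (nhdsWithin_mono _ Ioc_subset_Ioi_self)
      rintro z ⟨hzr, hz⟩
      have hzx : 0 < z - x := sub_pos.2 hz.1
      have h1 : F z - F x ≤ p (g z - g x) := by
        have : F z ≤ p (g z - g x) + F x := by
          have := map_add_le_add p (g z - g x) (g x - g a)
          rwa [sub_add_sub_cancel] at this
        linarith
      have h2 : slope F x z ≤ p ((z - x)⁻¹ • (g z - g x)) := by
        rw [slope_def_field]
        rw [map_smul_eq_mul, Real.norm_eq_abs, abs_of_pos (inv_pos.2 hzx)]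
        rw [div_eq_inv_mul]
        have := mul_le_mul_of_nonneg_left h1 (le_of_lt (inv_pos.2 hzx))
        calc (z - x)⁻¹ * (F z - F x) ≤ (z - x)⁻¹ * p (g z - g x) := this
        _ = (z - x)⁻¹ * p (g z - g x) := rfl
      exact lt_of_le_of_lt h2 hzr
  have := main b ⟨hab, le_refl b⟩
  simpa [hF] using this

end Helpers2
section Helpers3

open Filter Topology Set MeasureTheory DS

variable {E : Type*} [AddCommGroup E] [Module ℝ E] [TopologicalSpace E]

/-- Uniform continuity of a continuous function on a compact interval, measured by a
continuous seminorm. -/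
lemma seminorm_unifcont (p : Seminorm ℝ E) (hp : Continuous p)
    [IsTopologicalAddGroup E] {F : ℝ → E} {J : Set ℝ} (hJ : IsCompact J)
    (hF : ContinuousOn F J) {ε : ℝ} (hε : 0 < ε) :
    ∃ δ > 0, ∀ σ ∈ J, ∀ τ ∈ J, |τ - σ| < δ → p (F τ - F σ) < ε := by
  have hH : ContinuousOn (fun q : ℝ × ℝ => p (F q.2 - F q.1)) (J ×ˢ J) := by
    refine hp.comp_continuousOn ?_
    exact (hF.comp continuous_snd.continuousOn (fun q hq => hq.2)).sub
      (hF.comp continuous_fst.continuousOn (fun q hq => hq.1))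
  have hu := (hJ.prod hJ).uniformContinuousOn_of_continuous hH
  obtain ⟨δ, hδ, hδ'⟩ := Metric.uniformContinuousOn_iff.1 hu ε hε
  refine ⟨δ, hδ, fun σ hσ τ hτ hd => ?_⟩
  have h1 := hδ' (σ, τ) ⟨hσ, hτ⟩ (σ, σ) ⟨hσ, hσ⟩ ?_
  · simp only [Real.dist_eq, sub_self, map_zero] at h1
    calc p (F τ - F σ) ≤ |p (F τ - F σ) - 0| := by
          rw [sub_zero]; exact le_abs_self _
    _ < ε := h1
  · rw [Prod.dist_eq]
    simp only [Real.dist_eq, sub_self, abs_zero]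
    rw [max_comm]
    simpa using hd

/-- Uniform differentiability estimate from uniform continuity of the derivative. -/
lemma seminorm_unifdiff [IsTopologicalAddGroup E] [ContinuousSMul ℝ E]
    (p : Seminorm ℝ E) (hp : Continuous p) {g g' : ℝ → E} {c d : ℝ}
    (hg : ∀ t ∈ Icc c d, HasDerivWithinAtLC g (g' t) (Icc c d) t)
    {ε δ : ℝ}
    (hδ' : ∀ σ ∈ Icc c d, ∀ τ ∈ Icc c d, |τ - σ| < δ → p (g' τ - g' σ) < ε)
    (hε : 0 ≤ ε) :
    ∀ σ ∈ Icc c d, ∀ τ ∈ Icc c d, |τ - σ| < δ →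
      p (g τ - g σ - (τ - σ) • g' σ) ≤ ε * |τ - σ| := by
  intro σ hσ τ hτ hd
  -- the auxiliary function G z = g z - z • g' σ has derivative g' z - g' σ
  have hGd : ∀ a b : ℝ, c ≤ a → b ≤ d → ∀ z ∈ Icc a b,
      HasDerivWithinAtLC (fun w => g w - w • g' σ) (g' z - g' σ) (Icc a b) z := by
    intro a b hca hbd z hz
    have hzJ : z ∈ Icc c d := ⟨le_trans hca hz.1, le_trans hz.2 hbd⟩
    have h1 : Tendsto (fun u : ℝ => (u - z)⁻¹ • (g u - g z))
        (𝓝[Icc a b \ {z}] z) (𝓝 (g' z)) :=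
      (hg z hzJ).mono_left (nhdsWithin_mono _ (diff_subset_diff_left
        (Icc_subset_Icc hca hbd)))
    have h2 : Tendsto (fun _ : ℝ => g' σ) (𝓝[Icc a b \ {z}] z) (𝓝 (g' σ)) :=
      tendsto_const_nhds
    have h3 := h1.sub h2
    refine h3.congr' ?_
    filter_upwards [eventually_mem_nhdsWithin] with u hu
    have huz : u - z ≠ 0 := sub_ne_zero.2 hu.2
    have : (u - z)⁻¹ • ((u - z) • g' σ) = g' σ := inv_smul_smul₀ huz _
    calc (u - z)⁻¹ • (g u - g z) - g' σ
        = (u - z)⁻¹ • (g u - g z) - (u - z)⁻¹ • ((u - z) • g' σ) := by rw [this]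
      _ = (u - z)⁻¹ • (g u - u • g' σ - (g z - z • g' σ)) := by module
  rcases le_total σ τ with hle | hle
  · have key := seminorm_mvi p hp (a := σ) (b := τ) hle
      (hGd σ τ hσ.1 hτ.2) hε ?_
    · have : g τ - τ • g' σ - (g σ - σ • g' σ) = g τ - g σ - (τ - σ) • g' σ := by
        rw [sub_smul]; abel
      rw [this] at key
      calc p (g τ - g σ - (τ - σ) • g' σ) ≤ ε * (τ - σ) := key
      _ = ε * |τ - σ| := by rw [abs_of_nonneg (sub_nonneg.2 hle)]
    · intro z hz
      have hzJ : z ∈ Icc c d := ⟨le_trans hσ.1 hz.1, le_trans hz.2 hτ.2⟩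
      refine le_of_lt (hδ' σ hσ z hzJ ?_)
      have hd2 : τ - σ < δ := by rwa [abs_of_nonneg (sub_nonneg.2 hle)] at hd
      rw [abs_of_nonneg (sub_nonneg.2 hz.1)]
      linarith [hz.2]
  · have key := seminorm_mvi p hp (a := τ) (b := σ) hle
      (hGd τ σ hτ.1 hσ.2) hε ?_
    · have : g σ - σ • g' σ - (g τ - τ • g' σ) = -(g τ - g σ - (τ - σ) • g' σ) := by
        rw [sub_smul]; abel
      rw [this, map_neg_eq_map] at key
      calc p (g τ - g σ - (τ - σ) • g' σ) ≤ ε * (σ - τ) := key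
      _ = ε * |τ - σ| := by rw [abs_sub_comm, abs_of_nonneg (sub_nonneg.2 hle)]
    · intro z hz
      have hzJ : z ∈ Icc c d := ⟨le_trans hτ.1 hz.1, le_trans hz.2 hσ.2⟩
      refine le_of_lt (hδ' σ hσ z hzJ ?_)
      have hd2 : σ - τ < δ := by
        rwa [abs_sub_comm, abs_of_nonneg (sub_nonneg.2 hle)] at hd
      rw [abs_of_nonpos (by linarith [hz.2] : z - σ ≤ 0)]
      linarith [hz.1]
end Helpers3
section Helpers4

open Filter Topology Set MeasureTheory DS

variable {E : Type*} [AddCommGroup E] [Module ℝ E] [TopologicalSpace E]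
  [IsTopologicalAddGroup E] [ContinuousSMul ℝ E]

/-- The extension `σ ↦ f (max σ 0)` is differentiable on `[-t₀, t₀]` with derivative
`σ ↦ f' (max σ 0)`, provided `f 0 = 0` and `f' 0 = 0`. -/
lemma hat_deriv {t₀ : ℝ} (ht₀ : 0 < t₀) {f f' : ℝ → E}
    (hd : ∀ t ∈ Icc (0:ℝ) t₀, HasDerivWithinAtLC f (f' t) (Icc (0:ℝ) t₀) t)
    (hf0 : f 0 = 0) (hf'0 : f' 0 = 0) :
    ∀ z ∈ Icc (-t₀) t₀,
      HasDerivWithinAtLC (fun σ => f (max σ 0)) (f' (max z 0)) (Icc (-t₀) t₀) z := by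
  intro z hz
  set J : Set ℝ := Icc (-t₀) t₀ with hJ
  rcases lt_trichotomy z 0 with hneg | hzero | hpos
  · -- z < 0 : locally constant 0
    have hmax : max z 0 = 0 := max_eq_right (le_of_lt hneg)
    rw [hmax, hf'0]
    have hIio : Iio (0:ℝ) ∈ 𝓝[J \ {z}] z :=
      mem_nhdsWithin_of_mem_nhds (Iio_mem_nhds hneg)
    have : Tendsto (fun _ : ℝ => (0 : E)) (𝓝[J \ {z}] z) (𝓝 0) := tendsto_const_nhds
    refine this.congr' ?_
    filter_upwards [hIio] with u hu
    have h1 : f (max u 0) = 0 := by rw [max_eq_right (le_of_lt hu), hf0]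
    have h2 : f (max z 0) = 0 := by rw [hmax, hf0]
    rw [h1, h2]
    simp
  · -- z = 0
    subst hzero
    have hmax : max (0:ℝ) 0 = 0 := max_self 0
    rw [hmax]
    have hsplit : 𝓝[J \ {(0:ℝ)}] 0 ≤ 𝓝[Iio (0:ℝ)] 0 ⊔ 𝓝[Icc (0:ℝ) t₀ \ {0}] 0 := by
      rw [← nhdsWithin_union]
      refine nhdsWithin_mono _ ?_
      rintro u ⟨huJ, hu0⟩
      rw [mem_singleton_iff] at hu0
      rcases lt_or_ge u 0 with h | h
      · exact Or.inl h
      · exact Or.inr ⟨⟨h, huJ.2⟩, hu0⟩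
    refine Tendsto.mono_left ?_ hsplit
    rw [tendsto_sup]
    constructor
    · rw [hf'0]
      have : Tendsto (fun _ : ℝ => (0 : E)) (𝓝[Iio (0:ℝ)] 0) (𝓝 0) := tendsto_const_nhds
      refine this.congr' ?_
      filter_upwards [eventually_mem_nhdsWithin] with u hu
      rw [max_eq_right (le_of_lt hu), max_self, hf0]
      simp
    · have h0t : (0:ℝ) ∈ Icc (0:ℝ) t₀ := ⟨le_refl 0, le_of_lt ht₀⟩
      refine (hd 0 h0t).congr' ?_
      filter_upwards [eventually_mem_nhdsWithin] with u hu
      rw [max_eq_left hu.1.1, max_self]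
  · -- z > 0
    have hmax : max z 0 = z := max_eq_left (le_of_lt hpos)
    rw [hmax]
    have hzI : z ∈ Icc (0:ℝ) t₀ := ⟨le_of_lt hpos, hz.2⟩
    have hIoi : Ioi (0:ℝ) ∈ 𝓝 z := Ioi_mem_nhds hpos
    have heq : 𝓝[Ioi (0:ℝ) ∩ (J \ {z})] z = 𝓝[J \ {z}] z :=
      nhdsWithin_inter_of_mem (mem_nhdsWithin_of_mem_nhds hIoi)
    rw [HasDerivWithinAtLC, ← heq]
    have hle : 𝓝[Ioi (0:ℝ) ∩ (J \ {z})] z ≤ 𝓝[Icc (0:ℝ) t₀ \ {z}] z := by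
      refine nhdsWithin_mono _ ?_
      rintro u ⟨hu0, huJ, huz⟩
      exact ⟨⟨le_of_lt hu0, huJ.2⟩, huz⟩
    refine ((hd z hzI).mono_left hle).congr' ?_
    filter_upwards [eventually_mem_nhdsWithin] with u hu
    rw [max_eq_left (le_of_lt hu.1), hmax]

end Helpers4
section Helpers5

open Filter Topology Set MeasureTheory DS

variable {E : Type*} [AddCommGroup E] [Module ℝ E] [TopologicalSpace E]
  [IsTopologicalAddGroup E] [ContinuousSMul ℝ E]

omit [IsTopologicalAddGroup E] [ContinuousSMul ℝ E] in
lemma seminorm_sum_le (p : Seminorm ℝ E) (n : ℕ) (f : ℕ → E) :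
    p (∑ k ∈ Finset.range n, f k) ≤ ∑ k ∈ Finset.range n, p (f k) := by
  induction n with
  | zero => simp
  | succ m ih =>
    rw [Finset.sum_range_succ, Finset.sum_range_succ]
    exact le_trans (map_add_le_add p _ _) (by linarith)

/-- Joint continuity of `σ ↦ S (c - σ) (y σ)` for a strongly continuous, locally
equicontinuous family `S`, in a space whose topology is given by seminorms. -/
lemma kernel_continuousOn {ι' : Type*} [Nonempty ι'] {q : SeminormFamily ℝ E ι'}
    (hq : WithSeminorms q) (S : ℝ → E →L[ℝ] E)
    (hSc : ∀ v : E, ContinuousOn (fun t : ℝ => S t v) (Ici (0:ℝ)))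
    (hSeq : IsLocallyEquicontinuous S) {t₀ : ℝ} (ht₀ : 0 < t₀)
    {y : ℝ → E} {a b c : ℝ} (hy : ContinuousOn y (Icc a b))
    (hc : ∀ σ ∈ Icc a b, c - σ ∈ Icc (0:ℝ) t₀) :
    ContinuousOn (fun σ : ℝ => S (c - σ) (y σ)) (Icc a b) := by
  intro σ₀ hσ₀
  have hterm2 : Tendsto (fun σ : ℝ => S (c - σ) (y σ₀)) (𝓝[Icc a b] σ₀)
      (𝓝 (S (c - σ₀) (y σ₀))) := by
    have h1 : ContinuousWithinAt (fun σ : ℝ => c - σ) (Icc a b) σ₀ :=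
      (continuous_const.sub continuous_id).continuousWithinAt
    have h2 : ContinuousWithinAt (fun t : ℝ => S t (y σ₀)) (Ici (0:ℝ)) (c - σ₀) :=
      hSc (y σ₀) _ (hc σ₀ hσ₀).1
    exact h2.comp h1 (fun x hx => (hc x hx).1)
  have hterm1 : Tendsto (fun σ : ℝ => S (c - σ) (y σ - y σ₀)) (𝓝[Icc a b] σ₀)
      (𝓝 0) := by
    rw [hq.tendsto_nhds]
    intro i ε hε
    obtain ⟨p, hpc, M, hM, hbound⟩ := hSeq t₀ ht₀ (q i) (hq.continuous_seminorm i)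
    have hy0 : Tendsto (fun σ : ℝ => y σ - y σ₀) (𝓝[Icc a b] σ₀) (𝓝 0) := by
      have h : Tendsto y (𝓝[Icc a b] σ₀) (𝓝 (y σ₀)) := hy σ₀ hσ₀
      have h2 := h.sub (tendsto_const_nhds (x := y σ₀))
      rwa [sub_self] at h2
    have hp1 : Tendsto (fun σ : ℝ => p (y σ - y σ₀)) (𝓝[Icc a b] σ₀) (𝓝 (p 0)) :=
      (hpc.tendsto 0).comp hy0
    rw [map_zero] at hp1
    have hp0 := hp1.const_mul M
    rw [mul_zero] at hp0
    have hlt : ∀ᶠ σ in 𝓝[Icc a b] σ₀, M * p (y σ - y σ₀) < ε :=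
      hp0.eventually_lt_const hε
    filter_upwards [hlt, eventually_mem_nhdsWithin] with σ hσlt hσmem
    rw [sub_zero]
    calc q i (S (c - σ) (y σ - y σ₀)) ≤ M * p (y σ - y σ₀) :=
      hbound _ _ (hc σ hσmem)
    _ < ε := hσlt
  have hsum := hterm1.add hterm2
  rw [zero_add] at hsum
  refine hsum.congr fun σ => ?_
  rw [← map_add]
  congr 1
  abel

/-- Estimate on Riemann integrals coming from local equicontinuity. -/
lemma equicont_estimate {ι : Type*} [Nonempty ι] {Γ : SeminormFamily ℝ E ι}
    (hΓ : WithSeminorms Γ) (T : ℝ → E →L[ℝ] E)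
    (hTloc : IsLocallyEquicontinuous T) {t₀ : ℝ} (ht₀ : 0 < t₀) (i : ι) :
    ∃ C : ℝ, 0 ≤ C ∧ ∃ p : Seminorm ℝ E, Continuous p ∧
      ∀ Ψ : ℝ → E, ContinuousOn Ψ (Icc (0:ℝ) t₀) → ∀ x : E,
        IsRiemannIntegral (fun s : ℝ => T (t₀ - s) (Ψ s)) 0 t₀ x →
          Γ i x ≤ C * ⨆ s ∈ Icc (0:ℝ) t₀, p (Ψ s) := by
  obtain ⟨p, hpc, M, hM, hbound⟩ := hTloc t₀ ht₀ (Γ i) (hΓ.continuous_seminorm i)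
  refine ⟨t₀ * M, by positivity, p, hpc, fun Ψ hΨ x hx => ?_⟩
  set Sup := ⨆ s ∈ Icc (0:ℝ) t₀, p (Ψ s) with hSup
  have hpΨc : ContinuousOn (fun s => p (Ψ s)) (Icc (0:ℝ) t₀) := hpc.comp_continuousOn hΨ
  have hbdd : BddAbove ((fun s => p (Ψ s)) '' Icc (0:ℝ) t₀) :=
    (isCompact_Icc.image_of_continuousOn hpΨc).bddAbove
  have hSup_ge : ∀ s ∈ Icc (0:ℝ) t₀, p (Ψ s) ≤ Sup :=
    fun s hs => my_le_biSup _ hbdd hs (fun x _ => apply_nonneg p _)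
  have hSup0 : 0 ≤ Sup :=
    le_trans (apply_nonneg p (Ψ 0)) (hSup_ge 0 ⟨le_refl 0, le_of_lt ht₀⟩)
  have hGx : Tendsto (fun n : ℕ => Γ i (((t₀ - 0) / (n:ℝ)) •
      ∑ k ∈ Finset.range n, T (t₀ - (0 + (t₀ - 0) * (k:ℝ) / n)) (Ψ (0 + (t₀ - 0) * (k:ℝ) / n))))
      atTop (𝓝 (Γ i x)) := ((hΓ.continuous_seminorm i).tendsto x).comp hx
  simp only [sub_zero, zero_add] at hGx
  refine le_of_tendsto hGx ?_
  filter_upwards [eventually_ge_atTop 1] with n hn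
  have hnpos : (0:ℝ) < n := by exact_mod_cast hn
  have ht₀n : (0:ℝ) ≤ t₀ / n := by positivity
  have hptmem : ∀ k : ℕ, k < n → t₀ * (k:ℝ) / n ∈ Icc (0:ℝ) t₀ := by
    intro k hk
    constructor
    · positivity
    · rw [div_le_iff₀ hnpos]
      have : (k:ℝ) ≤ n := by exact_mod_cast le_of_lt hk
      nlinarith
  calc Γ i ((t₀ / (n:ℝ)) • ∑ k ∈ Finset.range n,
        T (t₀ - t₀ * (k:ℝ) / n) (Ψ (t₀ * (k:ℝ) / n)))
      = (t₀ / n) * Γ i (∑ k ∈ Finset.range n,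
        T (t₀ - t₀ * (k:ℝ) / n) (Ψ (t₀ * (k:ℝ) / n))) := by
        rw [map_smul_eq_mul, Real.norm_eq_abs, abs_of_nonneg ht₀n]
    _ ≤ (t₀ / n) * ∑ k ∈ Finset.range n,
        Γ i (T (t₀ - t₀ * (k:ℝ) / n) (Ψ (t₀ * (k:ℝ) / n))) := by
        refine mul_le_mul_of_nonneg_left ?_ ht₀n
        exact seminorm_sum_le (Γ i) n _
    _ ≤ (t₀ / n) * ∑ _k ∈ Finset.range n, M * Sup := by
        refine mul_le_mul_of_nonneg_left ?_ ht₀n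
        refine Finset.sum_le_sum fun k hk => ?_
        have hkmem := hptmem k (Finset.mem_range.1 hk)
        have h1 : t₀ - t₀ * (k:ℝ) / n ∈ Icc (0:ℝ) t₀ := by
          constructor
          · linarith [hkmem.2]
          · linarith [hkmem.1]
        calc Γ i (T (t₀ - t₀ * (k:ℝ) / n) (Ψ (t₀ * (k:ℝ) / n)))
            ≤ M * p (Ψ (t₀ * (k:ℝ) / n)) := hbound _ _ h1
          _ ≤ M * Sup := mul_le_mul_of_nonneg_left (hSup_ge _ hkmem) hM
    _ = (t₀/n) * (n * (M * Sup)) := by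
        rw [Finset.sum_const, Finset.card_range, nsmul_eq_mul]
    _ = t₀ * M * Sup := by
        field_simp
end Helpers5
section Master

open Filter Topology Set MeasureTheory DS

lemma master_deriv
    {X Xb : Type*} {ι : Type*} [Nonempty ι]
    [AddCommGroup X] [Module ℝ X] [TopologicalSpace X] [IsTopologicalAddGroup X]
    [ContinuousSMul ℝ X] [T2Space X]
    [AddCommGroup Xb] [Module ℝ Xb] [TopologicalSpace Xb] [IsTopologicalAddGroup Xb]
    [ContinuousSMul ℝ Xb] [T2Space Xb] [LocallyConvexSpace ℝ Xb]
    (Γ : SeminormFamily ℝ X ι) (hΓ : WithSeminorms Γ)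
    (Tb : ℝ → Xb →L[ℝ] Xb)
    (hTbc : ∀ v : Xb, ContinuousOn (fun t : ℝ => Tb t v) (Ici (0:ℝ)))
    (hTbloc : IsLocallyEquicontinuous Tb)
    (B : X →L[ℝ] Xb) (e : X →L[ℝ] Xb)
    {t₀ : ℝ} (ht₀ : 0 < t₀)
    (Rop : (ℝ → X) → ℝ → X)
    (hres : ∀ f : ℝ → X, MemXc t₀ f → MemXc t₀ (Rop f) ∧
      ∀ t ∈ Icc (0:ℝ) t₀,
        IsRiemannIntegral (fun s : ℝ => Tb (t - s) (B (f s))) 0 t (e (Rop f t)))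
    (hest : ∀ i : ι, ∃ C : ℝ, 0 ≤ C ∧ ∃ p : Seminorm ℝ X, Continuous p ∧
      ∀ Ψ : ℝ → X, ContinuousOn Ψ (Icc (0:ℝ) t₀) → ∀ x : X,
        IsRiemannIntegral (fun s : ℝ => Tb (t₀ - s) (B (Ψ s))) 0 t₀ (e x) →
          Γ i x ≤ C * ⨆ s ∈ Icc (0:ℝ) t₀, p (Ψ s)) :
    ∀ f f' : ℝ → X, MemDD t₀ f f' → MemDD t₀ (Rop f) (fun t => Rop f' t) := by
  intro f f' hff'
  obtain ⟨hfX, hfd, hf'c, hf'0⟩ := hff'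
  have hf'X : MemXc t₀ f' := ⟨hf'c, hf'0⟩
  obtain ⟨hRfX, hRf⟩ := hres f hfX
  obtain ⟨hRf'X, hRf'⟩ := hres f' hf'X
  have hq : WithSeminorms (gaugeSeminormFamily ℝ Xb) := with_gaugeSeminormFamily
  -- continuity of "hat" functions
  have hhatcont : ∀ g : ℝ → X, ContinuousOn g (Icc (0:ℝ) t₀) →
      ContinuousOn (fun σ : ℝ => g (max σ 0)) (Icc (-t₀) t₀) := by
    intro g hg
    refine hg.comp ((continuous_id.max continuous_const).continuousOn) ?_
    intro σ hσ
    exact ⟨le_max_right _ _, max_le hσ.2 (le_of_lt ht₀)⟩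
  -- Claim (A) : shifted representation of the resolvent values
  have keyA : ∀ g : ℝ → X, MemXc t₀ g → ∀ u ∈ Icc (0:ℝ) t₀,
      IsRiemannIntegral (fun s : ℝ => Tb (t₀ - s) (B (g (max (s - t₀ + u) 0)))) 0 t₀
        (e (Rop g u)) := by
    intro g hgX u hu
    obtain ⟨hRgX, hRg⟩ := hres g hgX
    set Φ : ℝ → X := fun s => g (max (s - t₀ + u) 0) with hΦ
    have hΦc : ContinuousOn Φ (Icc (0:ℝ) t₀) := by
      refine (hhatcont g hgX.1).comp
        ((continuous_id.sub continuous_const).add continuous_const).continuousOn ?_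
      intro s hs
      constructor
      · simp only [id_eq]
        linarith [hs.1, hu.1]
      · simp only [id_eq]
        linarith [hs.2, hu.2]
    have hΦX : MemXc t₀ Φ := by
      refine ⟨hΦc, ?_⟩
      simp only [hΦ]
      rw [max_eq_right (by linarith [hu.2] : (0:ℝ) - t₀ + u ≤ 0)]
      exact hgX.2
    obtain ⟨hRΦX, hRΦ⟩ := hres Φ hΦX
    have hint := hRΦ t₀ ⟨le_of_lt ht₀, le_refl t₀⟩
    have heq : e (Rop Φ t₀) = e (Rop g u) := by
      by_contra hne
      obtain ⟨φ, hφ⟩ := SeparatingDual.exists_separating_of_ne (R := ℝ) hne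
      apply hφ
      have hcont1 : ContinuousOn (fun s : ℝ => Tb (t₀ - s) (B (Φ s))) (Icc (0:ℝ) t₀) := by
        refine kernel_continuousOn hq Tb hTbc hTbloc ht₀
          (B.continuous.comp_continuousOn hΦc) ?_
        intro σ hσ
        exact ⟨by linarith [hσ.2], by linarith [hσ.1]⟩
      have h1 : φ (e (Rop Φ t₀)) = ∫ s in (0:ℝ)..t₀, φ (Tb (t₀ - s) (B (Φ s))) :=
        clm_isRiemannIntegral (le_of_lt ht₀) hint hcont1 φ
      have hcont2 : ContinuousOn (fun s : ℝ => Tb (u - s) (B (g s))) (Icc (0:ℝ) u) := by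
        refine kernel_continuousOn hq Tb hTbc hTbloc ht₀
          (B.continuous.comp_continuousOn (hgX.1.mono (Icc_subset_Icc_right hu.2))) ?_
        intro σ hσ
        exact ⟨by linarith [hσ.2], by linarith [hσ.1, hu.2]⟩
      have h2 : φ (e (Rop g u)) = ∫ s in (0:ℝ)..u, φ (Tb (u - s) (B (g s))) :=
        clm_isRiemannIntegral hu.1 (hRg u hu) hcont2 φ
      set G : ℝ → ℝ := fun σ => φ (Tb (u - σ) (B (g (max σ 0)))) with hG
      have hGc : ContinuousOn G (Icc (u - t₀) u) := by
        refine φ.continuous.comp_continuousOn ?_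
        refine kernel_continuousOn hq Tb hTbc hTbloc ht₀
          (B.continuous.comp_continuousOn ((hhatcont g hgX.1).mono ?_)) ?_
        · exact Icc_subset_Icc (by linarith [hu.1]) hu.2
        · intro σ hσ
          exact ⟨by linarith [hσ.2], by linarith [hσ.1]⟩
      have h3 : (∫ s in (0:ℝ)..t₀, φ (Tb (t₀ - s) (B (Φ s))))
          = ∫ s in (0:ℝ)..t₀, G (s - (t₀ - u)) := by
        refine intervalIntegral.integral_congr fun s _ => ?_
        show φ (Tb (t₀ - s) (B (g (max (s - t₀ + u) 0))))
          = φ (Tb (u - (s - (t₀ - u))) (B (g (max (s - (t₀ - u)) 0))))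
        have e1 : s - (t₀ - u) = s - t₀ + u := by ring
        have e2 : u - (s - t₀ + u) = t₀ - s := by ring
        rw [e1, e2]
      have h4 : (∫ s in (0:ℝ)..t₀, G (s - (t₀ - u))) = ∫ s in (u - t₀)..u, G s := by
        rw [intervalIntegral.integral_comp_sub_right G (t₀ - u)]
        congr 1 <;> ring
      have hG1 : IntervalIntegrable G volume (u - t₀) 0 := by
        refine (hGc.mono ?_).intervalIntegrable
        rw [uIcc_of_le (by linarith [hu.2] : u - t₀ ≤ 0)]
        exact Icc_subset_Icc (le_refl _) hu.1
      have hG2 : IntervalIntegrable G volume 0 u := by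
        refine (hGc.mono ?_).intervalIntegrable
        rw [uIcc_of_le hu.1]
        exact Icc_subset_Icc (by linarith [hu.2]) (le_refl _)
      have h5 : (∫ s in (u - t₀)..(0:ℝ), G s) + (∫ s in (0:ℝ)..u, G s)
          = ∫ s in (u - t₀)..u, G s :=
        intervalIntegral.integral_add_adjacent_intervals hG1 hG2
      have h6 : (∫ s in (u - t₀)..(0:ℝ), G s) = 0 := by
        have : EqOn G (fun _ => (0:ℝ)) (uIcc (u - t₀) 0) := by
          intro σ hσ
          rw [uIcc_of_le (by linarith [hu.2] : u - t₀ ≤ 0)] at hσ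
          show φ (Tb (u - σ) (B (g (max σ 0)))) = 0
          rw [max_eq_right hσ.2, hgX.2, map_zero, map_zero, map_zero]
        rw [intervalIntegral.integral_congr this]
        simp
      have h7 : (∫ s in (0:ℝ)..u, G s) = ∫ s in (0:ℝ)..u, φ (Tb (u - s) (B (g s))) := by
        refine intervalIntegral.integral_congr fun σ hσ => ?_
        rw [uIcc_of_le hu.1] at hσ
        show φ (Tb (u - σ) (B (g (max σ 0)))) = _
        rw [max_eq_left hσ.1]
      rw [h1, h2, h3, h4, ← h5, h6, h7, zero_add]
    rw [heq] at hint
    exact hint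
  -- assemble MemDD
  refine ⟨hRfX, ?_, hRf'X.1, hRf'X.2⟩
  intro t ht
  show Tendsto (fun u : ℝ => (u - t)⁻¹ • (Rop f u - Rop f t))
    (𝓝[Icc (0:ℝ) t₀ \ {t}] t) (𝓝 (Rop f' t))
  rw [hΓ.tendsto_nhds]
  intro i ε hε
  obtain ⟨C, hC0, p, hpc, hesti⟩ := hest i
  have hC1 : (0:ℝ) < C + 1 := by linarith
  set ε' : ℝ := ε / (C + 1) with hε'def
  have hε'pos : 0 < ε' := by positivity
  have hf'hatc : ContinuousOn (fun σ : ℝ => f' (max σ 0)) (Icc (-t₀) t₀) := hhatcont f' hf'c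
  obtain ⟨δ, hδpos, hδ⟩ := seminorm_unifcont p hpc isCompact_Icc hf'hatc hε'pos
  have hhatd := hat_deriv ht₀ hfd hfX.2 hf'0
  have hud := seminorm_unifdiff p hpc hhatd hδ (le_of_lt hε'pos)
  have hev1 : ∀ᶠ u in 𝓝[Icc (0:ℝ) t₀ \ {t}] t, |u - t| < δ := by
    refine eventually_nhdsWithin_of_eventually_nhds ?_
    have habs : Tendsto (fun u : ℝ => |u - t|) (𝓝 t) (𝓝 |t - t|) :=
      ((continuous_id.sub continuous_const).abs).tendsto t
    rw [sub_self, abs_zero] at habs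
    exact habs.eventually_lt_const hδpos
  filter_upwards [hev1, eventually_mem_nhdsWithin] with u huδ humem
  obtain ⟨huI, hune⟩ := humem
  have hunet : u ≠ t := by simpa using hune
  have hutne : u - t ≠ 0 := sub_ne_zero.2 hunet
  set c : ℝ := (u - t)⁻¹ with hc
  set Ψ : ℝ → X := fun s => c • (f (max (s - t₀ + u) 0) - f (max (s - t₀ + t) 0))
    - f' (max (s - t₀ + t) 0) with hΨ
  have hAu := keyA f hfX u huI
  have hAt := keyA f hfX t ht
  have hA't := keyA f' hf'X t ht
  -- Claim (B)
  have hBint : IsRiemannIntegral (fun s : ℝ => Tb (t₀ - s) (B (Ψ s))) 0 t₀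
      (e (c • (Rop f u - Rop f t) - Rop f' t)) := by
    have hAu' : Tendsto (fun n : ℕ => ((t₀ - 0) / (n : ℝ)) •
        ∑ k ∈ Finset.range n, Tb (t₀ - (0 + (t₀ - 0) * (k:ℝ) / n))
          (B (f (max ((0 + (t₀ - 0) * (k:ℝ) / n) - t₀ + u) 0))))
        atTop (𝓝 (e (Rop f u))) := hAu
    have hAt' : Tendsto (fun n : ℕ => ((t₀ - 0) / (n : ℝ)) •
        ∑ k ∈ Finset.range n, Tb (t₀ - (0 + (t₀ - 0) * (k:ℝ) / n))
          (B (f (max ((0 + (t₀ - 0) * (k:ℝ) / n) - t₀ + t) 0))))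
        atTop (𝓝 (e (Rop f t))) := hAt
    have hA't' : Tendsto (fun n : ℕ => ((t₀ - 0) / (n : ℝ)) •
        ∑ k ∈ Finset.range n, Tb (t₀ - (0 + (t₀ - 0) * (k:ℝ) / n))
          (B (f' (max ((0 + (t₀ - 0) * (k:ℝ) / n) - t₀ + t) 0))))
        atTop (𝓝 (e (Rop f' t))) := hA't
    have hcomb := ((hAu'.const_smul c).sub (hAt'.const_smul c)).sub hA't'
    have htarget : e (c • (Rop f u - Rop f t) - Rop f' t)
        = c • e (Rop f u) - c • e (Rop f t) - e (Rop f' t) := by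
      rw [map_sub, _root_.map_smul, map_sub, smul_sub]
    show Tendsto (fun n : ℕ => ((t₀ - 0) / (n : ℝ)) •
        ∑ k ∈ Finset.range n, Tb (t₀ - (0 + (t₀ - 0) * (k:ℝ) / n))
          (B (Ψ (0 + (t₀ - 0) * (k:ℝ) / n)))) atTop
        (𝓝 (e (c • (Rop f u - Rop f t) - Rop f' t)))
    rw [htarget]
    refine hcomb.congr fun n => ?_
    simp only [hΨ, map_sub, _root_.map_smul, smul_sub, Finset.sum_sub_distrib,
      Finset.smul_sum, smul_comm ((t₀ - 0) / (n:ℝ)) c]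
  -- continuity of Ψ
  have hshift : ∀ v : ℝ, v ∈ Icc (0:ℝ) t₀ → ∀ g : ℝ → X, ContinuousOn g (Icc (0:ℝ) t₀) →
      ContinuousOn (fun s : ℝ => g (max (s - t₀ + v) 0)) (Icc (0:ℝ) t₀) := by
    intro v hv g hg
    refine (hhatcont g hg).comp
      ((continuous_id.sub continuous_const).add continuous_const).continuousOn ?_
    intro s hs
    constructor
    · simp only [id_eq]
      linarith [hs.1, hv.1]
    · simp only [id_eq]
      linarith [hs.2, hv.2]
  have hΨc : ContinuousOn Ψ (Icc (0:ℝ) t₀) := by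
    refine ContinuousOn.sub ?_ (hshift t ht f' hf'c)
    exact (((hshift u huI f hfX.1).sub (hshift t ht f hfX.1))).const_smul c
  have hΓle := hesti Ψ hΨc _ hBint
  -- Claim (D) : sup bound
  have hsup : (⨆ s ∈ Icc (0:ℝ) t₀, p (Ψ s)) ≤ ε' := by
    refine my_biSup_le (le_of_lt hε'pos) ?_
    intro s hs
    have hσJ : s - t₀ + t ∈ Icc (-t₀) t₀ :=
      ⟨by linarith [hs.1, ht.1], by linarith [hs.2, ht.2]⟩
    have hτJ : s - t₀ + u ∈ Icc (-t₀) t₀ :=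
      ⟨by linarith [hs.1, huI.1], by linarith [hs.2, huI.2]⟩
    have hdiff : |(s - t₀ + u) - (s - t₀ + t)| < δ := by
      rw [show (s - t₀ + u) - (s - t₀ + t) = u - t by ring]
      exact huδ
    have key := hud _ hσJ _ hτJ hdiff
    rw [show (s - t₀ + u) - (s - t₀ + t) = u - t by ring] at key
    have hidd : Ψ s = c • (f (max (s - t₀ + u) 0) - f (max (s - t₀ + t) 0)
        - (u - t) • f' (max (s - t₀ + t) 0)) := by
      simp only [hΨ]
      rw [smul_sub c (f (max (s - t₀ + u) 0) - f (max (s - t₀ + t) 0))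
        ((u - t) • f' (max (s - t₀ + t) 0)), inv_smul_smul₀ hutne]
    rw [hidd, map_smul_eq_mul, Real.norm_eq_abs, hc, abs_inv]
    have habsne : |u - t| ≠ 0 := abs_ne_zero.2 hutne
    calc |u - t|⁻¹ * p (f (max (s - t₀ + u) 0) - f (max (s - t₀ + t) 0)
          - (u - t) • f' (max (s - t₀ + t) 0))
        ≤ |u - t|⁻¹ * (ε' * |u - t|) := by
          refine mul_le_mul_of_nonneg_left key (by positivity)
      _ = ε' := by field_simp
  have hfinal : Γ i (c • (Rop f u - Rop f t) - Rop f' t) ≤ C * ε' :=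
    le_trans hΓle (mul_le_mul_of_nonneg_left hsup hC0)
  have hlast : C * ε' < ε := by
    rw [hε'def, mul_div_assoc']
    rw [div_lt_iff₀ hC1]
    nlinarith
  exact lt_of_le_of_lt hfinal hlast

end Master
section Helpers7

open Filter Topology Set MeasureTheory DS

variable {E : Type*} [AddCommGroup E] [Module ℝ E] [TopologicalSpace E]
  [IsTopologicalAddGroup E] [ContinuousSMul ℝ E]

lemma hasDerivWithinAtLC_sub {g₁ g₂ : ℝ → E} {y₁ y₂ : E} {s : Set ℝ} {t : ℝ}
    (h₁ : HasDerivWithinAtLC g₁ y₁ s t) (h₂ : HasDerivWithinAtLC g₂ y₂ s t) :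
    HasDerivWithinAtLC (fun τ => g₁ τ - g₂ τ) (y₁ - y₂) s t := by
  have h3 : Tendsto (fun u : ℝ => (u - t)⁻¹ • (g₁ u - g₁ t) - (u - t)⁻¹ • (g₂ u - g₂ t))
      (𝓝[s \ {t}] t) (𝓝 (y₁ - y₂)) := h₁.sub h₂
  refine h3.congr fun u => ?_
  show _ = (u - t)⁻¹ • ((g₁ u - g₂ u) - (g₁ t - g₂ t))
  module

lemma hasDerivWithinAtLC_sum {N : ℕ} {g : ℕ → ℝ → E} {g' : ℕ → E} {s : Set ℝ} {t : ℝ}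
    (h : ∀ n ∈ Finset.range N, HasDerivWithinAtLC (g n) (g' n) s t) :
    HasDerivWithinAtLC (fun τ => ∑ n ∈ Finset.range N, g n τ)
      (∑ n ∈ Finset.range N, g' n) s t := by
  have h3 := tendsto_finset_sum (Finset.range N) h
  refine h3.congr fun u => ?_
  show _ = (u - t)⁻¹ • ((∑ n ∈ Finset.range N, g n u) - ∑ n ∈ Finset.range N, g n t)
  rw [← Finset.sum_sub_distrib, Finset.smul_sum]

lemma memDD_sum {t₀ : ℝ} {N : ℕ} {g g' : ℕ → ℝ → E}
    (h : ∀ n ∈ Finset.range N, MemDD t₀ (g n) (g' n)) :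
    MemDD t₀ (fun τ => ∑ n ∈ Finset.range N, g n τ)
      (fun τ => ∑ n ∈ Finset.range N, g' n τ) := by
  refine ⟨⟨?_, ?_⟩, ?_, ?_, ?_⟩
  · exact continuousOn_finset_sum _ (fun n hn => (h n hn).1.1)
  · exact Finset.sum_eq_zero fun n hn => (h n hn).1.2
  · intro t ht
    exact hasDerivWithinAtLC_sum (fun n hn => (h n hn).2.1 t ht)
  · exact continuousOn_finset_sum _ (fun n hn => (h n hn).2.2.1)
  · exact Finset.sum_eq_zero fun n hn => (h n hn).2.2.2

/-- Uniform limits of derivatives: if `g N → G` and `g N' = h N → H` uniformly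
(in each seminorm), then `G ∈ D(𝒟)` with derivative `H`. -/
lemma memDD_of_uniform_limit {ι : Type*} [Nonempty ι] {Γ : SeminormFamily ℝ E ι}
    (hΓ : WithSeminorms Γ) {t₀ : ℝ} (ht₀ : 0 < t₀)
    {g h : ℕ → ℝ → E} {G H : ℝ → E}
    (hgd : ∀ N, MemDD t₀ (g N) (h N))
    (hGX : MemXc t₀ G) (hHX : MemXc t₀ H)
    (hgu : ∀ i, Tendsto (fun N => ⨆ s ∈ Icc (0:ℝ) t₀, Γ i (g N s - G s)) atTop (𝓝 0))
    (hhu : ∀ i, Tendsto (fun N => ⨆ s ∈ Icc (0:ℝ) t₀, Γ i (h N s - H s)) atTop (𝓝 0)) :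
    MemDD t₀ G H := by
  have hbdd : ∀ (i : ι) (F : ℝ → E), ContinuousOn F (Icc (0:ℝ) t₀) →
      BddAbove ((fun s => Γ i (F s)) '' Icc (0:ℝ) t₀) := by
    intro i F hF
    exact (isCompact_Icc.image_of_continuousOn
      ((hΓ.continuous_seminorm i).comp_continuousOn hF)).bddAbove
  have hpt : ∀ (i : ι) (F : ℝ → E), ContinuousOn F (Icc (0:ℝ) t₀) →
      ∀ s ∈ Icc (0:ℝ) t₀, Γ i (F s) ≤ ⨆ z ∈ Icc (0:ℝ) t₀, Γ i (F z) := by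
    intro i F hF s hs
    exact my_le_biSup _ (hbdd i F hF) hs (fun _ _ => apply_nonneg _ _)
  -- pointwise convergence of g
  have hptconv : ∀ s ∈ Icc (0:ℝ) t₀, Tendsto (fun M => g M s) atTop (𝓝 (G s)) := by
    intro s hs
    rw [hΓ.tendsto_nhds]
    intro j εj hεj
    filter_upwards [(hgu j).eventually_lt_const hεj] with M hM
    exact lt_of_le_of_lt (hpt j (fun z => g M z - G z)
      (((hgd M).1.1).sub hGX.1) s hs) hM
  refine ⟨hGX, ?_, hHX.1, hHX.2⟩
  intro t ht
  show Tendsto (fun u : ℝ => (u - t)⁻¹ • (G u - G t)) (𝓝[Icc (0:ℝ) t₀ \ {t}] t) (𝓝 (H t))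
  rw [hΓ.tendsto_nhds]
  intro i ε hε
  set b : ℕ → ℝ := fun M => ⨆ s ∈ Icc (0:ℝ) t₀, Γ i (h M s - H s) with hb
  obtain ⟨N, hN⟩ : ∃ N, b N < ε / 3 :=
    ((hhu i).eventually_lt_const (by linarith)).exists
  have hbnonneg : ∀ M, 0 ≤ b M := by
    intro M
    refine le_trans (apply_nonneg (Γ i) (h M 0 - H 0)) ?_
    exact hpt i (fun z => h M z - H z) (((hgd M).2.2.1).sub hHX.1) 0
      ⟨le_refl 0, le_of_lt ht₀⟩
  -- MVI-based bound
  have hkey1 : ∀ u ∈ Icc (0:ℝ) t₀, ∀ M : ℕ,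
      Γ i ((g M u - g M t) - (g N u - g N t)) ≤ (b M + b N) * |u - t| := by
    intro u hu M
    have hder : ∀ a c : ℝ, 0 ≤ a → c ≤ t₀ → ∀ z ∈ Icc a c,
        HasDerivWithinAtLC (fun w => g M w - g N w) (h M z - h N z) (Icc a c) z := by
      intro a c ha hc z hz
      have hzI : z ∈ Icc (0:ℝ) t₀ := ⟨le_trans ha hz.1, le_trans hz.2 hc⟩
      have h1 := ((hgd M).2.1 z hzI).mono_left
        (nhdsWithin_mono _ (diff_subset_diff_left (Icc_subset_Icc ha hc)))
      have h2 := ((hgd N).2.1 z hzI).mono_left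
        (nhdsWithin_mono _ (diff_subset_diff_left (Icc_subset_Icc ha hc)))
      exact hasDerivWithinAtLC_sub h1 h2
    have hderbound : ∀ z ∈ Icc (0:ℝ) t₀, Γ i (h M z - h N z) ≤ b M + b N := by
      intro z hz
      have h1 : Γ i (h M z - h N z) ≤ Γ i (h M z - H z) + Γ i (H z - h N z) := by
        have := map_add_le_add (Γ i) (h M z - H z) (H z - h N z)
        rwa [sub_add_sub_cancel] at this
      have h2 : Γ i (H z - h N z) = Γ i (h N z - H z) := map_sub_rev _ _ _
      have h3 := hpt i (fun w => h M w - H w) (((hgd M).2.2.1).sub hHX.1) z hz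
      have h4 := hpt i (fun w => h N w - H w) (((hgd N).2.2.1).sub hHX.1) z hz
      rw [h2] at h1
      exact le_trans h1 (add_le_add h3 h4)
    rcases le_total t u with hle | hle
    · have := seminorm_mvi (Γ i) (hΓ.continuous_seminorm i) hle
        (hder t u ht.1 hu.2) (by have := hbnonneg M; have := hbnonneg N; linarith)
        (fun z hz =>
          hderbound z ⟨le_trans ht.1 hz.1, le_trans hz.2 hu.2⟩)
      have heq : g M u - g N u - (g M t - g N t) = (g M u - g M t) - (g N u - g N t) := by
        abel
      rw [heq] at this
      calc Γ i ((g M u - g M t) - (g N u - g N t)) ≤ (b M + b N) * (u - t) := this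
      _ = (b M + b N) * |u - t| := by rw [abs_of_nonneg (sub_nonneg.2 hle)]
    · have := seminorm_mvi (Γ i) (hΓ.continuous_seminorm i) hle
        (hder u t hu.1 ht.2) (by have := hbnonneg M; have := hbnonneg N; linarith)
        (fun z hz =>
          hderbound z ⟨le_trans hu.1 hz.1, le_trans hz.2 ht.2⟩)
      have heq : g M t - g N t - (g M u - g N u)
          = -((g M u - g M t) - (g N u - g N t)) := by abel
      rw [heq, map_neg_eq_map] at this
      calc Γ i ((g M u - g M t) - (g N u - g N t)) ≤ (b M + b N) * (t - u) := this
      _ = (b M + b N) * |u - t| := by rw [abs_sub_comm, abs_of_nonneg (sub_nonneg.2 hle)]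
  -- limit M → ∞
  have hkey2 : ∀ u ∈ Icc (0:ℝ) t₀,
      Γ i ((G u - G t) - (g N u - g N t)) ≤ b N * |u - t| := by
    intro u hu
    have hconv : Tendsto (fun M => Γ i ((g M u - g M t) - (g N u - g N t))) atTop
        (𝓝 (Γ i ((G u - G t) - (g N u - g N t)))) := by
      refine ((hΓ.continuous_seminorm i).tendsto _).comp ?_
      exact ((hptconv u hu).sub (hptconv t ht)).sub tendsto_const_nhds
    have hrhs : Tendsto (fun M => (b M + b N) * |u - t|) atTop (𝓝 ((0 + b N) * |u - t|)) :=
      (((hhu i).add tendsto_const_nhds).mul tendsto_const_nhds)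
    rw [zero_add] at hrhs
    exact le_of_tendsto_of_tendsto hconv hrhs
      (Eventually.of_forall fun M => hkey1 u hu M)
  -- derivative of g N at t
  have hgNd : Tendsto (fun u : ℝ => Γ i ((u - t)⁻¹ • (g N u - g N t) - h N t))
      (𝓝[Icc (0:ℝ) t₀ \ {t}] t) (𝓝 0) := by
    have h1 : Tendsto (fun u : ℝ => (u - t)⁻¹ • (g N u - g N t))
        (𝓝[Icc (0:ℝ) t₀ \ {t}] t) (𝓝 (h N t)) := (hgd N).2.1 t ht
    have h2 := (h1.sub (tendsto_const_nhds (x := h N t)))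
    rw [sub_self] at h2
    exact ((hΓ.continuous_seminorm i).tendsto 0).comp h2 |>.congr (fun u => rfl)
      |>.mono_right (by rw [map_zero])
  have hT2ev : ∀ᶠ u in 𝓝[Icc (0:ℝ) t₀ \ {t}] t,
      Γ i ((u - t)⁻¹ • (g N u - g N t) - h N t) < ε / 3 :=
    hgNd.eventually_lt_const (by linarith)
  have hT3 : Γ i (h N t - H t) ≤ b N := hpt i (fun w => h N w - H w)
    (((hgd N).2.2.1).sub hHX.1) t ht
  filter_upwards [hT2ev, eventually_mem_nhdsWithin] with u hT2 humem
  obtain ⟨huI, hune⟩ := humem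
  have hunet : u ≠ t := by simpa using hune
  have hutne : (u - t) ≠ 0 := sub_ne_zero.2 hunet
  have habsne : |u - t| ≠ 0 := abs_ne_zero.2 hutne
  set T1 : E := (u - t)⁻¹ • ((G u - G t) - (g N u - g N t)) with hT1def
  set T2 : E := (u - t)⁻¹ • (g N u - g N t) - h N t with hT2def
  set T3 : E := h N t - H t with hT3def
  have hdecomp : (u - t)⁻¹ • (G u - G t) - H t = T1 + T2 + T3 := by
    rw [hT1def, hT2def, hT3def]
    module
  have htri : Γ i ((u - t)⁻¹ • (G u - G t) - H t) ≤ Γ i T1 + Γ i T2 + Γ i T3 := by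
    rw [hdecomp]
    exact le_trans (map_add_le_add _ _ _)
      (add_le_add (map_add_le_add _ _ _) le_rfl)
  have hT1b : Γ i T1 ≤ b N := by
    rw [hT1def, map_smul_eq_mul, Real.norm_eq_abs, abs_inv]
    calc |u - t|⁻¹ * Γ i ((G u - G t) - (g N u - g N t))
        ≤ |u - t|⁻¹ * (b N * |u - t|) :=
          mul_le_mul_of_nonneg_left (hkey2 u huI) (by positivity)
      _ = b N := by field_simp
  calc Γ i ((u - t)⁻¹ • (G u - G t) - H t) ≤ Γ i T1 + Γ i T2 + Γ i T3 := htri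
  _ < ε / 3 + ε / 3 + ε / 3 := by
      have h1 := lt_of_le_of_lt hT1b hN
      have h3 := lt_of_le_of_lt hT3 hN
      have h2 : Γ i T2 < ε / 3 := hT2
      linarith
  _ = ε := by ring

end Helpers7

/-- Under the standing assumptions of the Desch–Schappacher theorem: for every
`f ∈ D(𝒟)` one has `R̄ℬ f ∈ D(𝒟)` with `𝒟(R̄ℬ f) = R̄ℬ(𝒟 f)`, and consequently
`R_C f ∈ D(𝒟)` with `𝒟(R_C f) = R_C(𝒟 f)` — condition (ii) of the generalized resolvent
for the perturbed operator. -/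
theorem RB_RC_commute_with_D
    {X Xb : Type*} {ι : Type*} [Nonempty ι]
    [AddCommGroup X] [Module ℝ X] [UniformSpace X] [IsUniformAddGroup X]
    [ContinuousSMul ℝ X] [T2Space X]
    [AddCommGroup Xb] [Module ℝ Xb] [UniformSpace Xb] [IsUniformAddGroup Xb]
    [ContinuousSMul ℝ Xb] [T2Space Xb] [LocallyConvexSpace ℝ Xb]
    (hXsc : SeqComplete X) (hXbsc : SeqComplete Xb)
    (Γ : SeminormFamily ℝ X ι) (hΓ : WithSeminorms Γ)
    (T : ℝ → X →L[ℝ] X) (hT : IsC0Semigroup T) (hTloc : IsLocallyEquicontinuous T)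
    (domA : Set X) (A : X → X) (hA : IsGenerator T domA A)
    (e : X →L[ℝ] Xb) (he : Function.Injective e) (hedense : DenseRange e)
    (Tb : ℝ → Xb →L[ℝ] Xb) (hTb : IsC0Semigroup Tb) (hTbloc : IsLocallyEquicontinuous Tb)
    (Ab : Xb → Xb) (hAb : IsGenerator Tb (Set.range e) Ab)
    (hTbe : ∀ t : ℝ, 0 ≤ t → ∀ x : X, Tb t (e x) = e (T t x))
    (B : X →L[ℝ] Xb)
    (t₀ : ℝ) (ht₀ : 0 < t₀)
    -- condition (c): the integral `∫₀^{t₀} T̄(t₀ - t) B f(t) dt` belongs to `X`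
    (hc : ∀ f : ℝ → X, ContinuousOn f (Icc (0 : ℝ) t₀) →
      ∃ x : X, IsRiemannIntegral (fun t : ℝ => Tb (t₀ - t) (B (f t))) 0 t₀ (e x))
    -- condition (d): `p(∫₀^{t₀} T̄(t₀ - t) B f(t) dt) ≤ K · sup_{t ∈ [0,t₀]} p(f t)`
    (hd : ∀ i : ι, ∃ K : ℝ, K ∈ Ioo (0 : ℝ) 1 ∧
      ∀ f : ℝ → X, ContinuousOn f (Icc (0 : ℝ) t₀) → ∀ x : X,
        IsRiemannIntegral (fun t : ℝ => Tb (t₀ - t) (B (f t))) 0 t₀ (e x) →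
          Γ i x ≤ K * ⨆ t ∈ Icc (0 : ℝ) t₀, Γ i (f t))
    -- `R` is the generalized resolvent of `A`, `(R f)(t) = ∫₀ᵗ T(t-s) f(s) ds`
    (R : (ℝ → X) → ℝ → X)
    (hR : ∀ f : ℝ → X, MemXc t₀ f → MemXc t₀ (R f) ∧
      ∀ t ∈ Icc (0 : ℝ) t₀,
        IsRiemannIntegral (fun s : ℝ => T (t - s) (f s)) 0 t (R f t))
    -- `RB` is the operator `R̄ℬ : 𝒳 → 𝒳`, `(R̄ℬ f)(t) = ∫₀ᵗ T̄(t-s) B f(s) ds`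
    (RB : (ℝ → X) → ℝ → X)
    (hRB : ∀ f : ℝ → X, MemXc t₀ f → MemXc t₀ (RB f) ∧
      ∀ t ∈ Icc (0 : ℝ) t₀,
        IsRiemannIntegral (fun s : ℝ => Tb (t - s) (B (f s))) 0 t (e (RB f t)))
    -- `RC` is the operator `R_C f = Σ_{n=0}^∞ (R̄ℬ)ⁿ R f` (sum in the topology of `𝒳^∞`)
    (RC : (ℝ → X) → ℝ → X)
    (hRC : ∀ f : ℝ → X, MemXc t₀ f → MemXc t₀ (RC f) ∧
      ∀ i : ι, Tendsto (fun N : ℕ => ⨆ t ∈ Icc (0 : ℝ) t₀,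
          Γ i ((∑ n ∈ Finset.range N, (RB^[n] (R f)) t) - RC f t)) atTop (𝓝 0))
    :
    (∀ f f' : ℝ → X, MemDD t₀ f f' →
      ∃ g' : ℝ → X, MemDD t₀ (RB f) g' ∧ ∀ t ∈ Icc (0 : ℝ) t₀, g' t = RB f' t) ∧
    (∀ f f' : ℝ → X, MemDD t₀ f f' →
      ∃ g' : ℝ → X, MemDD t₀ (RC f) g' ∧ ∀ t ∈ Icc (0 : ℝ) t₀, g' t = RC f' t) := by
  haveI hlcX : LocallyConvexSpace ℝ X := hΓ.toLocallyConvexSpace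
  -- master lemma for RB
  have hM_RB : ∀ f f' : ℝ → X, MemDD t₀ f f' → MemDD t₀ (RB f) (fun t => RB f' t) := by
    refine master_deriv Γ hΓ Tb hTb.2.2 hTbloc B e ht₀ RB hRB ?_
    intro i
    obtain ⟨K, hK, hdi⟩ := hd i
    exact ⟨K, le_of_lt hK.1, Γ i, hΓ.continuous_seminorm i,
      fun Ψ hΨ x hx => hdi Ψ hΨ x hx⟩
  -- master lemma for R
  have hM_R : ∀ f f' : ℝ → X, MemDD t₀ f f' → MemDD t₀ (R f) (fun t => R f' t) := by
    have hresR : ∀ f : ℝ → X, MemXc t₀ f → MemXc t₀ (R f) ∧ ∀ t ∈ Icc (0:ℝ) t₀,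
        IsRiemannIntegral
          (fun s => T (t - s) ((ContinuousLinearMap.id ℝ X) (f s))) 0 t
          ((ContinuousLinearMap.id ℝ X) (R f t)) := by
      intro f hf
      obtain ⟨h1, h2⟩ := hR f hf
      refine ⟨h1, fun t ht => ?_⟩
      simpa using h2 t ht
    refine master_deriv Γ hΓ T hT.2.2 hTloc (ContinuousLinearMap.id ℝ X)
      (ContinuousLinearMap.id ℝ X) ht₀ R hresR ?_
    intro i
    obtain ⟨C, hC0, p, hp, hC⟩ := equicont_estimate hΓ T hTloc ht₀ i
    refine ⟨C, hC0, p, hp, fun Ψ hΨ x hx => hC Ψ hΨ x ?_⟩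
    simpa using hx
  -- iterates
  have hiter : ∀ (n : ℕ) (f f' : ℝ → X), MemDD t₀ f f' →
      MemDD t₀ (RB^[n] (R f)) (RB^[n] (R f')) := by
    intro n
    induction n with
    | zero =>
      intro f f' hff'
      simpa using hM_R f f' hff'
    | succ m ih =>
      intro f f' hff'
      rw [Function.iterate_succ_apply', Function.iterate_succ_apply']
      exact hM_RB _ _ (ih f f' hff')
  constructor
  · intro f f' hff'
    exact ⟨fun t => RB f' t, hM_RB f f' hff', fun t _ => rfl⟩
  · intro f f' hff'
    have hfX : MemXc t₀ f := hff'.1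
    have hf'X : MemXc t₀ f' := ⟨hff'.2.2.1, hff'.2.2.2⟩
    obtain ⟨hRCfX, hRCfconv⟩ := hRC f hfX
    obtain ⟨hRCf'X, hRCf'conv⟩ := hRC f' hf'X
    refine ⟨fun t => RC f' t, ?_, fun t _ => rfl⟩
    refine memDD_of_uniform_limit hΓ ht₀
      (g := fun N τ => ∑ n ∈ Finset.range N, (RB^[n] (R f)) τ)
      (h := fun N τ => ∑ n ∈ Finset.range N, (RB^[n] (R f')) τ)
      ?_ hRCfX hRCf'X ?_ ?_
    · intro N
      exact memDD_sum (fun n _ => hiter n f f' hff')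
    · intro i
      exact hRCfconv i
    · intro i
      exact hRCf'conv i
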